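/- For every m ≥ 1 and every word b : Fin m → Bool, the sequence x : ℕ → Bool defined by x (m * q + r) = xor (b r) (t q) for r < m (the concatenation b · b̄ · b̄ · b · ⋯ following the flipping pattern of the Thue–Morse sequence, where b̄ is the letter-by-letter complement of b) is a Morse-type minimal point: the orbit closure closure {σ^[k] x | k : ℕ} is minimal and uncountable. -/

import Mathlib

/-- The Thue–Morse sequence: `t n = true` iff the number of 1s in the
binary expansion of `n` is odd. -/
def thueMorse (n : ℕ) : Bool := (Nat.digits 2 n).count 1 % 2 == 1

/-- The shift map on the one-sided binary full shift. -/
def shift (x : ℕ → Bool) : ℕ → Bool := fun n => x (n + 1)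

lemma tm_zero : thueMorse 0 = false := by simp [thueMorse]

lemma tm_one : thueMorse 1 = true := by simp [thueMorse]

lemma tm_even (n : ℕ) : thueMorse (2 * n) = thueMorse n := by
  rcases Nat.eq_zero_or_pos n with h | h
  · simp [h]
  · unfold thueMorse
    rw [Nat.digits_def' (by norm_num : 1 < 2) (by omega)]
    have h1 : 2 * n % 2 = 0 := by omega
    have h2 : 2 * n / 2 = n := by omega
    rw [h1, h2]
    simp

lemma tm_odd (n : ℕ) : thueMorse (2 * n + 1) = ! thueMorse n := by
  unfold thueMorse
  rw [Nat.digits_def' (by norm_num : 1 < 2) (by omega)]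
  have h1 : (2 * n + 1) % 2 = 1 := by omega
  have h2 : (2 * n + 1) / 2 = n := by omega
  rw [h1, h2]
  rw [List.count_cons_self]
  generalize (Nat.digits 2 n).count 1 = c
  rcases Nat.mod_two_eq_zero_or_one c with h | h <;> simp [Nat.add_mod, h]

lemma tm_three : thueMorse 3 = false := by
  have h : (3:ℕ) = 2 * 1 + 1 := by norm_num
  rw [h, tm_odd, tm_one]
  rfl

lemma keyA (a q s : ℕ) (hs : s < 2 ^ a) :
    thueMorse (q * 2 ^ a + s) = xor (thueMorse q) (thueMorse s) := by
  induction a generalizing s with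
  | zero =>
    interval_cases s
    simp [tm_zero]
  | succ a ih =>
    rcases Nat.even_or_odd s with ⟨c, hc⟩ | ⟨c, hc⟩
    · have hc' : c < 2 ^ a := by rw [pow_succ] at hs; omega
      have he : q * 2 ^ (a + 1) = 2 * (q * 2 ^ a) := by ring
      have h1 : q * 2 ^ (a + 1) + s = 2 * (q * 2 ^ a + c) := by omega
      rw [h1, tm_even, ih c hc', hc]
      have : c + c = 2 * c := by omega
      rw [this, tm_even]
    · have hc' : c < 2 ^ a := by rw [pow_succ] at hs; omega
      have he : q * 2 ^ (a + 1) = 2 * (q * 2 ^ a) := by ring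
      have h1 : q * 2 ^ (a + 1) + s = 2 * (q * 2 ^ a + c) + 1 := by omega
      have h2 : s = 2 * c + 1 := hc
      rw [h1, tm_odd, ih c hc', h2, tm_odd]
      cases thueMorse q <;> cases thueMorse c <;> rfl

lemma lemB (q : ℕ) : ∃ u, q ≤ u ∧ u ≤ q + 2 ∧ thueMorse u = false := by
  set s := (q + 1) / 2 with hs
  have h1 : q ≤ 2 * s := by omega
  have h2 : 2 * s ≤ q + 1 := by omega
  cases hts : thueMorse s with
  | false => exact ⟨2 * s, h1, by omega, by rw [tm_even, hts]⟩
  | true => exact ⟨2 * s + 1, by omega, by omega, by rw [tm_odd, hts]; rfl⟩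

lemma tm_not_per (p : ℕ) (hp : 1 ≤ p) (h : ∀ s, thueMorse (s + p) = thueMorse s) : False := by
  have h1 := tm_odd (p - 1)
  have h2 : 2 * (p - 1) + 1 = (p - 1) + p := by omega
  rw [h2, h (p - 1)] at h1
  cases hv : thueMorse (p - 1) <;> rw [hv] at h1 <;> simp at h1

lemma cylinder_isOpen (y : ℕ → Bool) (L : ℕ) :
    IsOpen {z : ℕ → Bool | ∀ i < L, z i = y i} := by
  have h : {z : ℕ → Bool | ∀ i < L, z i = y i} =
      ⋂ i ∈ Finset.range L, (fun z : ℕ → Bool => z i) ⁻¹' {y i} := by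
    ext z; simp
  rw [h]
  exact isOpen_biInter_finset fun i _ =>
    (continuous_apply i).isOpen_preimage _ (isOpen_discrete _)

lemma exists_cylinder_subset {y : ℕ → Bool} {U : Set (ℕ → Bool)} (hU : U ∈ nhds y) :
    ∃ L, {z : ℕ → Bool | ∀ i < L, z i = y i} ⊆ U := by
  rw [nhds_pi, Filter.mem_pi] at hU
  obtain ⟨I, hI, V, hV, hVU⟩ := hU
  obtain ⟨L, hL⟩ := hI.bddAbove
  refine ⟨L + 1, fun z hz => hVU ?_⟩
  intro i hi
  have hzi : z i = y i := hz i (Nat.lt_succ_of_le (hL hi))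
  rw [hzi]
  exact mem_of_mem_nhds (hV i)

lemma mem_closure_iff_cyl {S : Set (ℕ → Bool)} {y : ℕ → Bool} :
    y ∈ closure S ↔ ∀ L, ∃ s ∈ S, ∀ i < L, s i = y i := by
  constructor
  · intro h L
    obtain ⟨s, hs1, hs2⟩ := mem_closure_iff.mp h _ (cylinder_isOpen y L) (fun i _ => rfl)
    exact ⟨s, hs2, hs1⟩
  · intro h
    rw [mem_closure_iff_nhds]
    intro U hU
    obtain ⟨L, hL⟩ := exists_cylinder_subset hU
    obtain ⟨s, hsS, hs⟩ := h L
    exact ⟨s, hL hs, hsS⟩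

lemma shift_iter (x : ℕ → Bool) (k n : ℕ) : shift^[k] x n = x (n + k) := by
  induction k generalizing x with
  | zero => rfl
  | succ k ih =>
    rw [Function.iterate_succ_apply, ih (shift x)]
    show x (n + k + 1) = x (n + (k + 1))
    ring_nf

section Block

variable {m : ℕ} (hm : 1 ≤ m) (b : Fin m → Bool) (x : ℕ → Bool)
variable (hx : ∀ q r : ℕ, ∀ h : r < m, x (m * q + r) = xor (b ⟨r, h⟩) (thueMorse q))

include hm hx

lemma keyX (a q n : ℕ) (hn : n < m * 2 ^ a) :
    x (m * 2 ^ a * q + n) = xor (thueMorse q) (x n) := by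
  have hr : n % m < m := Nat.mod_lt n (by omega)
  have hsplit : n = m * (n / m) + n % m := (Nat.div_add_mod n m).symm
  have hs : n / m < 2 ^ a := by
    rw [Nat.div_lt_iff_lt_mul (by omega : 0 < m)]
    calc n < m * 2 ^ a := hn
    _ = 2 ^ a * m := by ring
  have h1 : m * 2 ^ a * q + n = m * (2 ^ a * q + n / m) + n % m := by
    conv_lhs => rw [hsplit]
    ring
  rw [h1, hx (2 ^ a * q + n / m) (n % m) hr]
  conv_rhs => rw [hsplit, hx (n / m) (n % m) hr]
  have h2 : 2 ^ a * q + n / m = q * 2 ^ a + n / m := by ring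
  rw [h2, keyA a q (n / m) hs]
  cases thueMorse q <;> cases thueMorse (n / m) <;> cases b ⟨n % m, hr⟩ <;> rfl

lemma unifrec (L : ℕ) : ∃ N, ∀ k, ∃ j ≤ N, ∀ i < L, x (k + j + i) = x i := by
  set M := m * 2 ^ L with hM
  have hM1 : 1 ≤ M := by
    have := Nat.one_le_two_pow (n := L)
    calc 1 ≤ 2 ^ L := this
    _ ≤ m * 2 ^ L := Nat.le_mul_of_pos_left _ (by omega)
  have hLM : L ≤ M := by
    have h1 := Nat.lt_two_pow_self (n := L)
    have h2 : 2 ^ L ≤ m * 2 ^ L := Nat.le_mul_of_pos_left _ (by omega)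
    omega
  refine ⟨3 * M, fun k => ?_⟩
  obtain ⟨u, hu1, hu2, hu3⟩ := lemB (k / M + 1)
  have hdm := Nat.div_add_mod k M
  have hmod := Nat.mod_lt k (show 0 < M by omega)
  have hkMu : k ≤ M * u := by
    have : M * (k / M + 1) ≤ M * u := Nat.mul_le_mul_left M hu1
    have h3 : M * (k / M + 1) = M * (k / M) + M := by ring
    omega
  have hub : M * u ≤ k + 3 * M := by
    have : M * u ≤ M * (k / M + 3) := Nat.mul_le_mul_left M (by omega)
    have h3 : M * (k / M + 3) = M * (k / M) + 3 * M := by ring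
    omega
  refine ⟨M * u - k, by omega, fun i hi => ?_⟩
  have h4 : k + (M * u - k) + i = m * 2 ^ L * u + i := by rw [hM] at *; omega
  rw [h4, keyX hm b x hx L u i (by omega), hu3]
  exact Bool.false_xor _

lemma occ (k L : ℕ) : ∃ k', k < k' ∧ ∀ i < L, x (k' + i) = x (k + i) := by
  set a := k + L with ha
  have hbig : ∀ i, i < L → k + i < m * 2 ^ a := by
    intro i hi
    have h1 : k + i < 2 ^ a := by
      have := Nat.lt_two_pow_self (n := a)
      omega
    have h2 : 2 ^ a ≤ m * 2 ^ a := Nat.le_mul_of_pos_left _ (by omega)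
    omega
  have hpos : 1 ≤ m * 2 ^ a := by
    have := Nat.one_le_two_pow (n := a)
    have h2 : 2 ^ a ≤ m * 2 ^ a := Nat.le_mul_of_pos_left _ (by omega)
    omega
  refine ⟨m * 2 ^ a * 3 + k, by omega, fun i hi => ?_⟩
  have h1 : m * 2 ^ a * 3 + k + i = m * 2 ^ a * 3 + (k + i) := by omega
  rw [h1, keyX hm b x hx a 3 (k + i) (hbig i hi), tm_three]
  exact Bool.false_xor _

lemma evper (k p : ℕ) (hp : 1 ≤ p) (h : ∀ n, k ≤ n → x (n + p) = x n) : False := by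
  have hmul : ∀ c n, k ≤ n → x (n + c * p) = x n := by
    intro c
    induction c with
    | zero => intro n _; simp
    | succ c ih =>
      intro n hn
      have h1 : n + (c + 1) * p = (n + c * p) + p := by ring
      rw [h1, h (n + c * p) (by omega), ih n hn]
  have hstep : ∀ q, k ≤ q → thueMorse (q + p) = thueMorse q := by
    intro q hq
    have hkq : k ≤ m * q := le_trans hq (Nat.le_mul_of_pos_left _ (by omega))
    have h1 : x (m * q + m * p) = x (m * q) := hmul m (m * q) hkq
    have h2 : m * q + m * p = m * (q + p) + 0 := by ring
    have h3 : m * q = m * q + 0 := by ring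
    rw [h2, h3, hx (q + p) 0 hm, hx q 0 hm] at h1
    cases hb : b ⟨0, hm⟩ <;> rw [hb] at h1 <;> simpa using h1
  exact tm_not_per p hp fun s => by
    have hsa : s + p < 2 ^ (s + p + 1) := by
      have := Nat.lt_two_pow_self (n := s + p + 1); omega
    have hq : k ≤ (k + 1) * 2 ^ (s + p + 1) + s := by
      have h1 : k + 1 ≤ (k + 1) * 2 ^ (s + p + 1) :=
        Nat.le_mul_of_pos_right _ (by positivity)
      omega
    have e1 := keyA (s + p + 1) (k + 1) (s + p) hsa
    have e2 := keyA (s + p + 1) (k + 1) s (by omega)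
    have e3 := hstep ((k + 1) * 2 ^ (s + p + 1) + s) hq
    have h4 : (k + 1) * 2 ^ (s + p + 1) + s + p = (k + 1) * 2 ^ (s + p + 1) + (s + p) := by omega
    rw [h4, e1, e2] at e3
    cases thueMorse (k + 1) <;> simpa using e3

end Block


/-- For every nonempty word `b` of length `m`, the sequence obtained by
concatenating `b`, `b̄`, `b̄`, `b`, … following the flipping pattern of the
Thue–Morse sequence is a Morse-type minimal point: its orbit closure under
the shift map is minimal and uncountable. -/
theorem blockSubstituted_morseTypeMinimal (m : ℕ) (hm : 1 ≤ m)
    (b : Fin m → Bool) (x : ℕ → Bool)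
    (hx : ∀ q r : ℕ, ∀ h : r < m, x (m * q + r) = xor (b ⟨r, h⟩) (thueMorse q)) :
    (∀ K : Set (ℕ → Bool),
        K ⊆ closure {y : ℕ → Bool | ∃ k : ℕ, shift^[k] x = y} →
        K.Nonempty → IsClosed K → shift '' K ⊆ K →
        K = closure {y : ℕ → Bool | ∃ k : ℕ, shift^[k] x = y}) ∧
    ¬ (closure {y : ℕ → Bool | ∃ k : ℕ, shift^[k] x = y}).Countable := by
  set Orb : Set (ℕ → Bool) := {y : ℕ → Bool | ∃ k : ℕ, shift^[k] x = y} with hOrb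
  have horbC : ∀ k, shift^[k] x ∈ closure Orb := fun k => subset_closure ⟨k, rfl⟩
  constructor
  · intro K hKC hKne hKcl hKinv
    obtain ⟨y, hy⟩ := hKne
    have hiter : ∀ z, z ∈ K → ∀ k, shift^[k] z ∈ K := by
      intro z hz k
      induction k with
      | zero => exact hz
      | succ k ih =>
        rw [Function.iterate_succ_apply']
        exact hKinv ⟨_, ih, rfl⟩
    have hxK : x ∈ K := by
      have hyC : y ∈ closure Orb := hKC hy
      have hxcl : x ∈ closure (Set.range fun k => shift^[k] y) := by
        rw [mem_closure_iff_cyl]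
        intro L
        obtain ⟨N, hN⟩ := unifrec hm b x hx L
        obtain ⟨s, ⟨k0, hk0⟩, hsy⟩ := mem_closure_iff_cyl.mp hyC (N + L)
        obtain ⟨j, hjN, hj⟩ := hN k0
        refine ⟨shift^[j] y, ⟨j, rfl⟩, fun i hi => ?_⟩
        rw [shift_iter]
        have h0 := hsy (i + j) (by omega)
        rw [← hk0, shift_iter] at h0
        rw [← h0]
        have h2 : i + j + k0 = k0 + j + i := by omega
        rw [h2]
        exact hj i hi
      have hsub : (Set.range fun k => shift^[k] y) ⊆ K := by
        rintro _ ⟨k, rfl⟩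
        exact hiter y hy k
      exact (closure_minimal hsub hKcl) hxcl
    refine Set.Subset.antisymm hKC (closure_minimal ?_ hKcl)
    rintro _ ⟨k, rfl⟩
    exact hiter x hxK k
  · intro hcount
    have hCcl : IsClosed (closure Orb) := isClosed_closure
    have hCcomp : IsCompact (closure Orb) := hCcl.isCompact
    haveI : CompactSpace (closure Orb) := isCompact_iff_compactSpace.mp hCcomp
    haveI : Countable (closure Orb) := hcount.to_subtype
    haveI : Nonempty (closure Orb) := ⟨⟨x, horbC 0⟩⟩
    haveI : T2Space (closure Orb) := inferInstance
    haveI : LocallyCompactSpace (closure Orb) := inferInstance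
    haveI : BaireSpace (closure Orb) := inferInstance
    obtain ⟨c, hc⟩ := nonempty_interior_of_iUnion_of_closed
      (f := fun c : closure Orb => ({c} : Set (closure Orb)))
      (fun c => isClosed_singleton) (by ext z; simp)
    have hcint : c ∈ interior ({c} : Set (closure Orb)) := by
      obtain ⟨z, hz⟩ := hc
      have hzc : z ∈ ({c} : Set (closure Orb)) := interior_subset hz
      rw [Set.mem_singleton_iff] at hzc
      rwa [hzc] at hz
    have hopen : IsOpen ({c} : Set (closure Orb)) := by
      have h1 : interior ({c} : Set (closure Orb)) = {c} :=
        Set.Subset.antisymm interior_subset (by simpa using hcint)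
      rw [← h1]
      exact isOpen_interior
    obtain ⟨U, hUopen, hUpre⟩ := isOpen_induced_iff.mp hopen
    have hyU : (c : ℕ → Bool) ∈ U := by
      have : c ∈ Subtype.val ⁻¹' U := by rw [hUpre]; rfl
      exact this
    obtain ⟨L, hL⟩ := exists_cylinder_subset (hUopen.mem_nhds hyU)
    have hcylc : ∀ z, z ∈ closure Orb → (∀ i < L, z i = (c : ℕ → Bool) i) → z = (c : ℕ → Bool) := by
      intro z hzC hzcyl
      have h1 : (⟨z, hzC⟩ : closure Orb) ∈ Subtype.val ⁻¹' U := hL hzcyl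
      rw [hUpre] at h1
      exact congrArg Subtype.val h1
    obtain ⟨s, ⟨k, hk⟩, hscyl⟩ := mem_closure_iff_cyl.mp c.2 L
    subst hk
    have hkc : shift^[k] x = (c : ℕ → Bool) := hcylc _ (horbC k) hscyl
    obtain ⟨k', hk'gt, hk'⟩ := occ hm b x hx k L
    have hk'c : shift^[k'] x = (c : ℕ → Bool) := by
      apply hcylc _ (horbC k')
      intro i hi
      rw [shift_iter, ← hkc, shift_iter]
      have e1 : i + k' = k' + i := Nat.add_comm _ _
      have e2 : k + i = i + k := Nat.add_comm _ _
      rw [e1, hk' i hi, e2]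
    have heq : shift^[k'] x = shift^[k] x := hk'c.trans hkc.symm
    have hp : 1 ≤ k' - k := by omega
    have hper : ∀ n, k ≤ n → x (n + (k' - k)) = x n := by
      intro n hn
      have h1 := congrFun heq (n - k)
      rw [shift_iter, shift_iter] at h1
      have e1 : n - k + k' = n + (k' - k) := by omega
      have e2 : n - k + k = n := by omega
      rw [e1, e2] at h1
      exact h1
    exact evper hm b x hx k (k' - k) hp hper
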